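/- arXiv:1403.2789 — 2 statements merged into one kernel-verified Lean document; each statement's English description precedes it below -/
import Mathlib

section
/- Let (W_n)_{n≥1} be independent integer-valued random variables with sup_n P(|W_n| = y) ≤ C e^{-c|y|} and sup_n E[W_n] < 0. Let a_n → +∞ and r > 0. Then there exist constants C' > 0 and β'' > 0 such that for all n, P( Σ_{k=1}^{⌊n a_n⌋} W_k ≥ -r n √(a_n) ) ≤ C' e^{-β'' n a_n}. -/
open MeasureTheory ProbabilityTheory Real Filter

/-- Elementary second-order exponential bound. -/
lemma exp_le_quadratic_bound (u : ℝ) : Real.exp u ≤ 1 + u + u ^ 2 * Real.exp |u| := by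
  rcases le_or_gt 0 u with hu | hu
  · rw [abs_of_nonneg hu]
    have hE : 0 < Real.exp u := Real.exp_pos u
    have h0 : -u + 1 ≤ Real.exp (-u) := Real.add_one_le_exp (-u)
    have h1 : (1 - u) * Real.exp u ≤ Real.exp (-u) * Real.exp u := by
      apply mul_le_mul_of_nonneg_right _ hE.le
      linarith
    rw [← Real.exp_add, neg_add_cancel, Real.exp_zero] at h1
    nlinarith [mul_nonneg hu hE.le, sq_nonneg u]
  · rw [abs_of_neg hu]
    have hE : 0 < Real.exp u := Real.exp_pos u
    have h0 : u + 1 ≤ Real.exp u := Real.add_one_le_exp u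
    have h0' : -u + 1 ≤ Real.exp (-u) := Real.add_one_le_exp (-u)
    have h1 : Real.exp u * Real.exp (-u) = 1 := by
      rw [← Real.exp_add, add_neg_cancel, Real.exp_zero]
    have h2 : Real.exp u * (1 - u) ≤ 1 := by nlinarith
    have h3 : Real.exp u ≤ 1 + u + u ^ 2 := by nlinarith [sq_nonneg u, sq_nonneg (1 + u)]
    have h4 : (1 : ℝ) ≤ Real.exp (-u) := Real.one_le_exp (by linarith)
    nlinarith [sq_nonneg u]

lemma summable_int_sq_exp (c : ℝ) (hc : 0 < c) :
    Summable (fun y : ℤ => ((y : ℝ) ^ 2 * Real.exp (-(c / 2) * |(y : ℝ)|))) := by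
  have hr : ‖Real.exp (-(c / 2))‖ < 1 := by
    rw [Real.norm_eq_abs, abs_of_pos (Real.exp_pos _)]
    exact Real.exp_lt_one_iff.mpr (by linarith)
  have hnat : Summable (fun n : ℕ => (n : ℝ) ^ 2 * Real.exp (-(c / 2)) ^ n) :=
    summable_pow_mul_geometric_of_norm_lt_one 2 hr
  have key : ∀ n : ℕ, (n : ℝ) ^ 2 * Real.exp (-(c / 2)) ^ n
      = (n : ℝ) ^ 2 * Real.exp (-(c / 2) * (n : ℝ)) := by
    intro n
    rw [← Real.exp_nat_mul]
    ring_nf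
  apply Summable.of_nat_of_neg
  · refine hnat.congr fun n => ?_
    rw [key n]
    norm_num
  · refine hnat.congr fun n => ?_
    rw [key n]
    push_cast
    rw [abs_neg, abs_of_nonneg (Nat.cast_nonneg n)]
    ring_nf

theorem negative_drift_large_deviation_bound
    {Ω : Type*} [MeasurableSpace Ω] (P : Measure Ω) [IsProbabilityMeasure P]
    (W : ℕ → Ω → ℤ) (hmeas : ∀ n, Measurable (W n))
    (hindep : iIndepFun W P)
    (C c : ℝ) (hC : 0 < C) (hc : 0 < c)
    (htail : ∀ (n : ℕ) (y : ℤ), (P {ω | |W n ω| = y}).toReal ≤ C * Real.exp (-c * |(y : ℝ)|))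
    (hmean : (⨆ n : ℕ, ∫ ω, (W n ω : ℝ) ∂P) < 0)
    (a : ℕ → ℝ) (ha_pos : ∀ n, 0 < a n) (ha : Tendsto a atTop atTop)
    (r : ℝ) (hr : 0 < r) :
    ∃ C' : ℝ, 0 < C' ∧ ∃ β : ℝ, 0 < β ∧ ∀ n : ℕ,
      P {ω | -(r * n * Real.sqrt (a n)) ≤ (∑ k ∈ Finset.range ⌊(n : ℝ) * a n⌋₊, (W k ω : ℝ))}
        ≤ ENNReal.ofReal (C' * Real.exp (-β * n * a n)) := by
  -- the uniform negative mean
  obtain ⟨m, hm_pos, hmean_n⟩ : ∃ m : ℝ, 0 < m ∧ ∀ n : ℕ, ∫ ω, (W n ω : ℝ) ∂P ≤ -m := by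
    have hBdd : BddAbove (Set.range fun n : ℕ => ∫ ω, (W n ω : ℝ) ∂P) := by
      by_contra h
      rw [Real.iSup_of_not_bddAbove h] at hmean
      linarith
    refine ⟨-(⨆ n : ℕ, ∫ ω, (W n ω : ℝ) ∂P), by linarith, fun n => ?_⟩
    have := le_ciSup hBdd n
    linarith
  have hWint : ∀ n : ℕ, Integrable (fun ω => (W n ω : ℝ)) P := by
    intro n
    by_contra h
    have h1 := hmean_n n
    rw [integral_undef h] at h1
    linarith
  -- tail bound at the ENNReal level
  have htail' : ∀ (n : ℕ) (y : ℤ),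
      P ((W n) ⁻¹' {y}) ≤ ENNReal.ofReal (C * Real.exp (-c * |(y : ℝ)|)) := by
    intro n y
    have hsub : (W n) ⁻¹' {y} ⊆ {ω | |W n ω| = |y|} := by
      intro ω hω
      simp only [Set.mem_preimage, Set.mem_singleton_iff] at hω
      simp [hω]
    have h1 : (P {ω | |W n ω| = |y|}).toReal ≤ C * Real.exp (-c * |(y : ℝ)|) := by
      have := htail n |y|
      rwa [Int.cast_abs, abs_abs] at this
    calc P ((W n) ⁻¹' {y}) ≤ P {ω | |W n ω| = |y|} := measure_mono hsub
      _ = ENNReal.ofReal ((P {ω | |W n ω| = |y|}).toReal) :=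
          (ENNReal.ofReal_toReal (measure_ne_top _ _)).symm
      _ ≤ ENNReal.ofReal (C * Real.exp (-c * |(y : ℝ)|)) := ENNReal.ofReal_le_ofReal h1
  -- key expansion over values
  have hkey : ∀ (n : ℕ) (g : ℤ → ℝ),
      ∫⁻ ω, ENNReal.ofReal (g (W n ω)) ∂P
        ≤ ∑' y : ℤ, ENNReal.ofReal (g y) * ENNReal.ofReal (C * Real.exp (-c * |(y : ℝ)|)) := by
    intro n g
    have h1 : ∫⁻ ω, ENNReal.ofReal (g (W n ω)) ∂P
        = ∫⁻ z, ENNReal.ofReal (g z) ∂(P.map (W n)) :=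
      (lintegral_map (f := fun z => ENNReal.ofReal (g z)) measurable_from_top (hmeas n)).symm
    rw [h1, lintegral_countable' (fun z => ENNReal.ofReal (g z))]
    refine ENNReal.tsum_le_tsum fun y => ?_
    rw [Measure.map_apply (hmeas n) (measurableSet_singleton y)]
    exact mul_le_mul_right (htail' n y) _
  -- the second moment quantity
  set g₂ : ℤ → ℝ := fun y => (y : ℝ) ^ 2 * Real.exp ((c / 2) * |(y : ℝ)|) with hg₂_def
  have hg₂_nonneg : ∀ y, 0 ≤ g₂ y := fun y =>
    mul_nonneg (sq_nonneg _) (Real.exp_nonneg _)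
  set F : ℤ → ℝ := fun y => C * ((y : ℝ) ^ 2 * Real.exp (-(c / 2) * |(y : ℝ)|)) with hF_def
  have hF_nonneg : ∀ y, 0 ≤ F y := fun y =>
    mul_nonneg hC.le (mul_nonneg (sq_nonneg _) (Real.exp_nonneg _))
  have hFsum : Summable F := (summable_int_sq_exp c hc).mul_left C
  set K : ℝ := ∑' y : ℤ, F y with hK_def
  have hK_nonneg : 0 ≤ K := tsum_nonneg hF_nonneg
  clear_value K
  have hterm : ∀ y : ℤ, ENNReal.ofReal (g₂ y) * ENNReal.ofReal (C * Real.exp (-c * |(y : ℝ)|))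
      = ENNReal.ofReal (F y) := by
    intro y
    rw [← ENNReal.ofReal_mul (hg₂_nonneg y)]
    congr 1
    have hx : Real.exp ((c / 2) * |(y : ℝ)|) * Real.exp (-c * |(y : ℝ)|)
        = Real.exp (-(c / 2) * |(y : ℝ)|) := by
      rw [← Real.exp_add]; congr 1; ring
    calc g₂ y * (C * Real.exp (-c * |(y : ℝ)|))
        = C * ((y : ℝ) ^ 2 * (Real.exp ((c / 2) * |(y : ℝ)|) * Real.exp (-c * |(y : ℝ)|))) := by
          simp only [hg₂_def]; ring
      _ = F y := by rw [hx]
  have hg2 : ∀ n : ℕ, ∫⁻ ω, ENNReal.ofReal (g₂ (W n ω)) ∂P ≤ ENNReal.ofReal K := by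
    intro n
    refine (hkey n g₂).trans_eq ?_
    rw [hK_def, ENNReal.ofReal_tsum_of_nonneg hF_nonneg hFsum]
    exact tsum_congr hterm
  have hf₂meas : ∀ n : ℕ, Measurable (fun ω => g₂ (W n ω)) := fun n =>
    (measurable_from_top (f := g₂)).comp (hmeas n)
  have hf₂int : ∀ n : ℕ, Integrable (fun ω => g₂ (W n ω)) P := by
    intro n
    refine ⟨(hf₂meas n).aestronglyMeasurable, ?_⟩
    rw [hasFiniteIntegral_iff_ofReal (Filter.Eventually.of_forall fun ω => hg₂_nonneg _)]
    exact lt_of_le_of_lt (hg2 n) ENNReal.ofReal_lt_top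
  have hf₂le : ∀ n : ℕ, ∫ ω, g₂ (W n ω) ∂P ≤ K := by
    intro n
    rw [integral_eq_lintegral_of_nonneg_ae (Filter.Eventually.of_forall fun ω => hg₂_nonneg _)
      (hf₂meas n).aestronglyMeasurable]
    calc (∫⁻ ω, ENNReal.ofReal (g₂ (W n ω)) ∂P).toReal
        ≤ (ENNReal.ofReal K).toReal := ENNReal.toReal_mono ENNReal.ofReal_ne_top (hg2 n)
      _ = K := ENNReal.toReal_ofReal hK_nonneg
  -- choose t
  obtain ⟨D, hD_pos, hKD⟩ : ∃ D : ℝ, 0 < D ∧ K ≤ D := ⟨K + 1, by linarith, by linarith⟩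
  obtain ⟨t, ht_pos, ht_le, htD⟩ : ∃ t : ℝ, 0 < t ∧ t ≤ c / 2 ∧ t * D ≤ m / 2 := by
    refine ⟨min (c / 2) (m / (2 * D)), lt_min (by linarith) (div_pos hm_pos (by linarith)),
      min_le_left _ _, ?_⟩
    have h := min_le_right (c / 2) (m / (2 * D))
    have h2 := (le_div_iff₀ (by linarith : (0:ℝ) < 2 * D)).mp h
    nlinarith [mul_le_mul_of_nonneg_right h hD_pos.le]
  -- pointwise exponential bound
  have hexp_le : ∀ (n : ℕ) (ω : Ω), Real.exp (t * (W n ω : ℝ))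
      ≤ 1 + t * (W n ω : ℝ) + t ^ 2 * g₂ (W n ω) := by
    intro n ω
    set w : ℝ := (W n ω : ℝ)
    have h1 := exp_le_quadratic_bound (t * w)
    have h2 : Real.exp |t * w| ≤ Real.exp ((c / 2) * |w|) := by
      rw [abs_mul, abs_of_pos ht_pos]
      exact Real.exp_le_exp.mpr (mul_le_mul_of_nonneg_right ht_le (abs_nonneg w))
    calc Real.exp (t * w) ≤ 1 + t * w + (t * w) ^ 2 * Real.exp |t * w| := h1
      _ ≤ 1 + t * w + (t * w) ^ 2 * Real.exp ((c / 2) * |w|) := by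
          have := mul_le_mul_of_nonneg_left h2 (sq_nonneg (t * w))
          linarith
      _ = 1 + t * w + t ^ 2 * g₂ (W n ω) := by
          simp only [hg₂_def]
          ring
  -- integrability of exp moments
  have hintexp : ∀ n : ℕ, Integrable (fun ω => Real.exp (t * (W n ω : ℝ))) P := by
    intro n
    have hbound : Integrable (fun ω => 1 + t * |(W n ω : ℝ)| + t ^ 2 * g₂ (W n ω)) P :=
      ((integrable_const (1 : ℝ)).add ((hWint n).abs.const_mul t)).add
        ((hf₂int n).const_mul (t ^ 2))
    refine hbound.mono' ?_ ?_
    · exact (((measurable_from_top (f := (Int.cast : ℤ → ℝ))).comp (hmeas n) :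
        Measurable fun ω => (W n ω : ℝ)).const_mul
        t).exp.aestronglyMeasurable
    · refine Filter.Eventually.of_forall fun ω => ?_
      rw [Real.norm_eq_abs, abs_of_pos (Real.exp_pos _)]
      have h1 := hexp_le n ω
      have h2 : t * (W n ω : ℝ) ≤ t * |(W n ω : ℝ)| :=
        mul_le_mul_of_nonneg_left (le_abs_self _) ht_pos.le
      linarith
  -- mgf bound
  have hmgf : ∀ n : ℕ, mgf (fun ω => (W n ω : ℝ)) P t ≤ Real.exp (-(t * m / 2)) := by
    intro n
    have hbound2 : Integrable (fun ω => 1 + t * (W n ω : ℝ) + t ^ 2 * g₂ (W n ω)) P :=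
      ((integrable_const (1 : ℝ)).add ((hWint n).const_mul t)).add
        ((hf₂int n).const_mul (t ^ 2))
    have h1 : mgf (fun ω => (W n ω : ℝ)) P t
        ≤ ∫ ω, (1 + t * (W n ω : ℝ) + t ^ 2 * g₂ (W n ω)) ∂P := by
      rw [mgf]
      exact integral_mono (hintexp n) hbound2 (hexp_le n)
    have hi1 : Integrable (fun ω => 1 + t * (W n ω : ℝ)) P :=
      (integrable_const (1 : ℝ)).add ((hWint n).const_mul t)
    have hi2 : Integrable (fun ω => t ^ 2 * g₂ (W n ω)) P := (hf₂int n).const_mul (t ^ 2)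
    have h2 : ∫ ω, (1 + t * (W n ω : ℝ) + t ^ 2 * g₂ (W n ω)) ∂P
        = 1 + t * ∫ ω, (W n ω : ℝ) ∂P + t ^ 2 * ∫ ω, g₂ (W n ω) ∂P := by
      rw [integral_add hi1 hi2, integral_add (integrable_const (1 : ℝ))
        ((hWint n).const_mul t), integral_const, integral_const_mul, integral_const_mul]
      simp
    have h3 : 1 + t * ∫ ω, (W n ω : ℝ) ∂P + t ^ 2 * ∫ ω, g₂ (W n ω) ∂P
        ≤ 1 - t * m / 2 := by
      have hA := hmean_n n
      have hB := hf₂le n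
      have hC1 : t * ∫ ω, (W n ω : ℝ) ∂P ≤ t * (-m) :=
        mul_le_mul_of_nonneg_left hA ht_pos.le
      have hC2 : t ^ 2 * ∫ ω, g₂ (W n ω) ∂P ≤ t ^ 2 * K :=
        mul_le_mul_of_nonneg_left hB (sq_nonneg t)
      have hC3 : t ^ 2 * K ≤ t * (m / 2) := by
        have h5 : t * K ≤ t * D := mul_le_mul_of_nonneg_left hKD ht_pos.le
        nlinarith
      nlinarith
    have h4 : 1 - t * m / 2 ≤ Real.exp (-(t * m / 2)) := by
      have := Real.add_one_le_exp (-(t * m / 2))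
      linarith
    linarith
  -- independence of the real-valued versions
  have hindepR : iIndepFun (fun k => fun ω => (W k ω : ℝ)) P :=
    hindep.comp (fun _ => (Int.cast : ℤ → ℝ)) (fun _ => measurable_from_top)
  have hmeasR : ∀ k : ℕ, Measurable (fun ω => (W k ω : ℝ)) := fun k =>
    (measurable_from_top (f := (Int.cast : ℤ → ℝ))).comp (hmeas k)
  -- choose n₀
  obtain ⟨n₀, hn₀⟩ := Filter.eventually_atTop.mp (ha.eventually_ge_atTop ((4 * r / m) ^ 2))
  set β : ℝ := t * m / 4 with hβ_def
  have hβ_pos : 0 < β := by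
    rw [hβ_def]
    have := mul_pos ht_pos hm_pos
    linarith
  set C' : ℝ := Real.exp (t * m / 2) + ∑ k ∈ Finset.range n₀, Real.exp (β * k * a k)
    with hC'_def
  have hC'_pos : 0 < C' := by
    have h1 : (0:ℝ) ≤ ∑ k ∈ Finset.range n₀, Real.exp (β * k * a k) :=
      Finset.sum_nonneg fun k _ => (Real.exp_pos _).le
    have h2 := Real.exp_pos (t * m / 2)
    simp only [hC'_def]; linarith
  clear_value β C'
  refine ⟨C', hC'_pos, β, hβ_pos, fun n => ?_⟩
  rcases lt_or_ge n n₀ with hn | hn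
  · -- small n: trivial bound
    have h1 : Real.exp (β * n * a n) ≤ C' := by
      have hmem : n ∈ Finset.range n₀ := Finset.mem_range.mpr hn
      have := Finset.single_le_sum (f := fun k => Real.exp (β * k * a k))
        (fun k _ => (Real.exp_pos _).le) hmem
      have := Real.exp_pos (t * m / 2)
      simp only [hC'_def]
      linarith
    have h2 : (1:ℝ) ≤ C' * Real.exp (-β * n * a n) := by
      have hkey : Real.exp (β * n * a n) * Real.exp (-β * n * a n) = 1 := by
        rw [← Real.exp_add]; ring_nf; exact Real.exp_zero
      have := mul_le_mul_of_nonneg_right h1 (Real.exp_nonneg (-β * n * a n))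
      linarith
    calc P _ ≤ 1 := prob_le_one
      _ = ENNReal.ofReal 1 := ENNReal.ofReal_one.symm
      _ ≤ ENNReal.ofReal (C' * Real.exp (-β * n * a n)) := ENNReal.ofReal_le_ofReal h2
  · -- large n: Chernoff bound
    set N : ℕ := ⌊(n : ℝ) * a n⌋₊ with hN_def
    set ε : ℝ := -(r * n * Real.sqrt (a n)) with hε_def
    set X : ℕ → Ω → ℝ := fun k ω => (W k ω : ℝ) with hX_def
    have hintS : Integrable (fun ω => Real.exp (t * (∑ k ∈ Finset.range N, X k) ω)) P :=
      hindepR.integrable_exp_mul_sum hmeasR (fun i _ => hintexp i)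
    have hcher := measure_ge_le_exp_mul_mgf (μ := P) (X := ∑ k ∈ Finset.range N, X k)
      ε ht_pos.le hintS
    have hset : {ω | ε ≤ ∑ k ∈ Finset.range N, (W k ω : ℝ)}
        = {ω | ε ≤ (∑ k ∈ Finset.range N, X k) ω} := by
      ext ω
      simp [hε_def, hX_def, Finset.sum_apply]
    have hprod : mgf (∑ k ∈ Finset.range N, X k) P t
        ≤ Real.exp (-(t * m / 2)) ^ N := by
      rw [hindepR.mgf_sum hmeasR]
      calc ∏ k ∈ Finset.range N, mgf (X k) P t
          ≤ ∏ _k ∈ Finset.range N, Real.exp (-(t * m / 2)) :=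
            Finset.prod_le_prod (fun k _ => mgf_nonneg) (fun k _ => hmgf k)
        _ = Real.exp (-(t * m / 2)) ^ N := by rw [Finset.prod_const, Finset.card_range]
    have hNbound : (n : ℝ) * a n - 1 ≤ (N : ℝ) := by
      have := Nat.lt_floor_add_one ((n : ℝ) * a n)
      linarith
    have hsqrt : 4 * r / m ≤ Real.sqrt (a n) := by
      have h1 : (4 * r / m) ^ 2 ≤ a n := hn₀ n hn
      have h2 : 0 ≤ 4 * r / m := by positivity
      calc 4 * r / m = Real.sqrt ((4 * r / m) ^ 2) := (Real.sqrt_sq h2).symm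
        _ ≤ Real.sqrt (a n) := Real.sqrt_le_sqrt h1
    have hr_bound : r * n * Real.sqrt (a n) ≤ m / 4 * ((n : ℝ) * a n) := by
      have hs := Real.sqrt_nonneg (a n)
      have hsq : Real.sqrt (a n) * Real.sqrt (a n) = a n :=
        Real.mul_self_sqrt (ha_pos n).le
      have h1 : r * Real.sqrt (a n) ≤ m / 4 * a n := by
        have h2 : r ≤ m / 4 * Real.sqrt (a n) := by
          have := mul_le_mul_of_nonneg_left hsqrt (by linarith : (0:ℝ) ≤ m / 4)
          rw [mul_div_assoc] at this
          have hm4 : m / 4 * (4 * (r / m)) = r := by field_simp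
          calc r = m / 4 * (4 * (r / m)) := hm4.symm
            _ ≤ m / 4 * Real.sqrt (a n) := by
              apply mul_le_mul_of_nonneg_left _ (by linarith)
              calc 4 * (r / m) = 4 * r / m := by ring
                _ ≤ Real.sqrt (a n) := hsqrt
        calc r * Real.sqrt (a n) ≤ m / 4 * Real.sqrt (a n) * Real.sqrt (a n) :=
              mul_le_mul_of_nonneg_right h2 hs
          _ = m / 4 * a n := by rw [mul_assoc, hsq]
      have hn_nonneg : (0:ℝ) ≤ (n:ℝ) := Nat.cast_nonneg n
      calc r * n * Real.sqrt (a n) = (n : ℝ) * (r * Real.sqrt (a n)) := by ring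
        _ ≤ (n : ℝ) * (m / 4 * a n) := mul_le_mul_of_nonneg_left h1 hn_nonneg
        _ = m / 4 * ((n : ℝ) * a n) := by ring
    clear_value N ε X
    -- main real bound
    have hreal : Real.exp (-t * ε) * Real.exp (-(t * m / 2)) ^ N
        ≤ C' * Real.exp (-β * n * a n) := by
      rw [← Real.exp_nat_mul, ← Real.exp_add]
      have hexp_arg : -t * ε + (N : ℝ) * -(t * m / 2)
          ≤ t * m / 2 + -β * n * a n := by
        have h1 : -t * ε = t * (r * n * Real.sqrt (a n)) := by
          simp only [hε_def]; ring
        have h2 : t * (r * n * Real.sqrt (a n)) ≤ t * (m / 4 * ((n : ℝ) * a n)) :=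
          mul_le_mul_of_nonneg_left hr_bound ht_pos.le
        have h3 : (N : ℝ) * -(t * m / 2) ≤ ((n : ℝ) * a n - 1) * -(t * m / 2) := by
          apply mul_le_mul_of_nonpos_right hNbound
          have := mul_pos ht_pos hm_pos
          linarith only [this]
        simp only [hβ_def]
        linarith only [h1, h2, h3]
      calc Real.exp (-t * ε + (N : ℝ) * -(t * m / 2))
          ≤ Real.exp (t * m / 2 + -β * n * a n) := Real.exp_le_exp.mpr hexp_arg
        _ = Real.exp (t * m / 2) * Real.exp (-β * n * a n) := Real.exp_add _ _
        _ ≤ C' * Real.exp (-β * n * a n) := by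
            apply mul_le_mul_of_nonneg_right _ (Real.exp_nonneg _)
            have h6 : (0:ℝ) ≤ ∑ k ∈ Finset.range n₀, Real.exp (β * k * a k) :=
              Finset.sum_nonneg fun k _ => (Real.exp_pos _).le
            simp only [hC'_def]
            linarith only [h6]
    have hfinal : (P {ω | ε ≤ (∑ k ∈ Finset.range N, X k) ω}).toReal
        ≤ C' * Real.exp (-β * n * a n) := by
      calc (P {ω | ε ≤ (∑ k ∈ Finset.range N, X k) ω}).toReal
          ≤ Real.exp (-t * ε) * mgf (∑ k ∈ Finset.range N, X k) P t := hcher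
        _ ≤ Real.exp (-t * ε) * Real.exp (-(t * m / 2)) ^ N :=
            mul_le_mul_of_nonneg_left hprod (Real.exp_nonneg _)
        _ ≤ C' * Real.exp (-β * n * a n) := hreal
    rw [hset]
    exact (ENNReal.le_ofReal_iff_toReal_le (measure_ne_top _ _)
      (mul_nonneg hC'_pos.le (Real.exp_nonneg _))).mpr hfinal
end

section
/- Let f(x) = (1/√(2π)) e^{-x²/2} and Φ(x) = ∫_x^∞ e^{-u²/2} du. Given M ≥ 1 and 0 < ε ≤ ε₀ sufficiently small, there exists σ₀ < ∞ such that for all σ₀ < σ₁ ≤ σ₂, whenever positive sequences (ξ_k)_{k∈ℤ} and (ζ_k)_{k∈ℤ} satisfy ξ_k ≥ ((1-ε)/σ₂) f(k/σ₂) for |k| ≤ Mσ₂ and ζ_k ≥ ((1-ε)/σ₁) f(k/σ₁) for |k| ≤ Mσ₁, then for all |z| ≤ Mσ₂/9: Σ_k ξ_{z+k} ζ_{-k} ≥ (1-ε)³ (1 - Φ(M/4)) · (1/√(σ₁² + σ₂²)) f(z/√(σ₁² + σ₂²)). -/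
open MeasureTheory Real

noncomputable def gaussDens (x : ℝ) : ℝ := (1 / Real.sqrt (2 * Real.pi)) * Real.exp (-x ^ 2 / 2)

noncomputable def gaussTail (x : ℝ) : ℝ := ∫ u in Set.Ioi x, Real.exp (-u ^ 2 / 2)

lemma gaussDens_nonneg (x : ℝ) : 0 ≤ gaussDens x := by unfold gaussDens; positivity

lemma gaussDens_even (x : ℝ) : gaussDens (-x) = gaussDens x := by
  unfold gaussDens; rw [neg_pow]; norm_num

lemma gaussDens_anti {x y : ℝ} (hx : 0 ≤ x) (h : x ≤ y) : gaussDens y ≤ gaussDens x := by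
  unfold gaussDens
  have : Real.exp (-y ^ 2 / 2) ≤ Real.exp (-x ^ 2 / 2) := by
    apply Real.exp_le_exp.2; nlinarith
  apply mul_le_mul_of_nonneg_left this (by positivity)

lemma gauss_cont : Continuous (fun u : ℝ => Real.exp (-u ^ 2 / 2)) := by fun_prop

lemma gauss_integrable : Integrable (fun u : ℝ => Real.exp (-u ^ 2 / 2)) := by
  have h := integrable_exp_neg_mul_sq (show (0:ℝ) < 1/2 by norm_num)
  have e : (fun u : ℝ => Real.exp (-u ^ 2 / 2)) = fun u : ℝ => Real.exp (-(1/2) * u ^ 2) := by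
    funext u; congr 1; ring
  rw [e]; exact h

lemma gauss_ii (a b : ℝ) : IntervalIntegrable (fun u : ℝ => Real.exp (-u ^ 2 / 2)) volume a b :=
  gauss_cont.intervalIntegrable a b

lemma gauss_total : (∫ u : ℝ, Real.exp (-u ^ 2 / 2)) = Real.sqrt (2 * Real.pi) := by
  have e : (fun u : ℝ => Real.exp (-u ^ 2 / 2)) = fun u : ℝ => Real.exp (-(1/2) * u ^ 2) := by
    funext u; congr 1; ring
  rw [e, integral_gaussian]
  norm_num [mul_comm]

lemma gaussTail_nonneg (x : ℝ) : 0 ≤ gaussTail x :=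
  setIntegral_nonneg measurableSet_Ioi fun u _ => (Real.exp_pos _).le

lemma gaussTail_eq (r : ℝ) :
    gaussTail r = (∫ u : ℝ, Real.exp (-u ^ 2 / 2)) - ∫ u in Set.Iic r, Real.exp (-u ^ 2 / 2) := by
  have h := intervalIntegral.integral_Iic_add_Ioi (b := r) gauss_integrable.integrableOn gauss_integrable.integrableOn
  unfold gaussTail; linarith

lemma gauss_interval_eq (p q : ℝ) :
    ∫ x in p..q, Real.exp (-x ^ 2 / 2) = gaussTail p - gaussTail q := by
  rw [gaussTail_eq p, gaussTail_eq q,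
    ← intervalIntegral.integral_Iic_sub_Iic gauss_integrable.integrableOn
      gauss_integrable.integrableOn]
  ring

lemma gaussTail_zero : gaussTail 0 = Real.sqrt (2 * Real.pi) / 2 := by
  have h1 := intervalIntegral.integral_Iic_add_Ioi (b := (0:ℝ)) gauss_integrable.integrableOn
    gauss_integrable.integrableOn
  have h2 : (∫ u in Set.Iic (0:ℝ), Real.exp (-u ^ 2 / 2)) = gaussTail 0 := by
    have h3 := integral_comp_neg_Iic (0:ℝ) (fun u : ℝ => Real.exp (-u ^ 2 / 2))
    simp only [neg_sq, neg_zero] at h3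
    unfold gaussTail
    exact h3
  rw [gauss_total] at h1
  unfold gaussTail at *
  linarith

lemma gauss_int_incl {p p' q' q : ℝ} (h1 : p ≤ p') (h2 : p' ≤ q') (h3 : q' ≤ q) :
    ∫ x in p'..q', Real.exp (-x ^ 2 / 2) ≤ ∫ x in p..q, Real.exp (-x ^ 2 / 2) := by
  rw [← intervalIntegral.integral_add_adjacent_intervals (gauss_ii p p') (gauss_ii p' q),
      ← intervalIntegral.integral_add_adjacent_intervals (gauss_ii p' q') (gauss_ii q' q)]
  have n1 : 0 ≤ ∫ x in p..p', Real.exp (-x ^ 2 / 2) :=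
    intervalIntegral.integral_nonneg h1 fun x _ => (Real.exp_pos _).le
  have n2 : 0 ≤ ∫ x in q'..q, Real.exp (-x ^ 2 / 2) :=
    intervalIntegral.integral_nonneg h3 fun x _ => (Real.exp_pos _).le
  linarith

lemma gauss_int_le_length {p q : ℝ} (h : p ≤ q) :
    ∫ x in p..q, Real.exp (-x ^ 2 / 2) ≤ q - p := by
  calc ∫ x in p..q, Real.exp (-x ^ 2 / 2) ≤ ∫ _x in p..q, (1:ℝ) := by
        apply intervalIntegral.integral_mono_on h (gauss_ii p q) (intervalIntegrable_const)
        intro x _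
        rw [show (1:ℝ) = Real.exp 0 by simp]
        apply Real.exp_le_exp.2; nlinarith [sq_nonneg x]
    _ = q - p := by simp

lemma gauss_int_sym (p q : ℝ) :
    ∫ x in (-q)..(-p), Real.exp (-x ^ 2 / 2) = ∫ x in p..q, Real.exp (-x ^ 2 / 2) := by
  rw [← intervalIntegral.integral_comp_neg fun x : ℝ => Real.exp (-x ^ 2 / 2)]
  congr 1; funext x; rw [neg_pow]; norm_num

lemma sqrt_two_pi_bounds : 2.5 ≤ Real.sqrt (2 * Real.pi) ∧ Real.sqrt (2 * Real.pi) ≤ 3 := by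
  have h1 := Real.pi_gt_d6
  have h2 := Real.pi_lt_d2
  constructor
  · rw [show (2.5:ℝ) = Real.sqrt (2.5 ^ 2) by rw [Real.sqrt_sq]; norm_num]
    apply Real.sqrt_le_sqrt; nlinarith
  · rw [show (3:ℝ) = Real.sqrt (3 ^ 2) by rw [Real.sqrt_sq]; norm_num]
    apply Real.sqrt_le_sqrt; nlinarith

lemma gauss_prod (σ₁ σ₂ z k : ℝ) (h1 : 0 < σ₁) (h2 : 0 < σ₂) :
    ((1/σ₂) * gaussDens ((z+k)/σ₂)) * ((1/σ₁) * gaussDens (k/σ₁)) =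
    ((1/Real.sqrt (σ₁^2+σ₂^2)) * gaussDens (z/Real.sqrt (σ₁^2+σ₂^2))) *
    ((1/(σ₁*σ₂/Real.sqrt (σ₁^2+σ₂^2))) *
      gaussDens ((k - (-(z*σ₁^2/(σ₁^2+σ₂^2)))) / (σ₁*σ₂/Real.sqrt (σ₁^2+σ₂^2)))) := by
  have hs : (0:ℝ) < σ₁^2+σ₂^2 := by positivity
  set σ : ℝ := Real.sqrt (σ₁^2+σ₂^2) with hσdef
  have hσpos : 0 < σ := Real.sqrt_pos.2 hs
  have hσsq : σ^2 = σ₁^2+σ₂^2 := Real.sq_sqrt hs.le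
  set τ : ℝ := σ₁*σ₂/σ with hτdef
  have hτpos : 0 < τ := by positivity
  have hτsq : τ^2 = σ₁^2*σ₂^2/(σ₁^2+σ₂^2) := by
    rw [hτdef, div_pow, hσsq]; ring
  unfold gaussDens
  rw [show ((1/σ₂) * ((1 / Real.sqrt (2 * Real.pi)) * Real.exp (-((z+k)/σ₂) ^ 2 / 2))) *
      ((1/σ₁) * ((1 / Real.sqrt (2 * Real.pi)) * Real.exp (-(k/σ₁) ^ 2 / 2))) =
      (1/(σ₂*σ₁) * (1 / Real.sqrt (2 * Real.pi) * (1 / Real.sqrt (2 * Real.pi)))) *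
      (Real.exp (-((z+k)/σ₂) ^ 2 / 2) * Real.exp (-(k/σ₁) ^ 2 / 2)) by ring,
    ← Real.exp_add]
  rw [show ((1/σ) * ((1 / Real.sqrt (2 * Real.pi)) * Real.exp (-(z/σ) ^ 2 / 2))) *
      ((1/τ) * ((1 / Real.sqrt (2 * Real.pi)) *
        Real.exp (-((k - (-(z*σ₁^2/(σ₁^2+σ₂^2))))/τ) ^ 2 / 2))) =
      (1/(σ*τ) * (1 / Real.sqrt (2 * Real.pi) * (1 / Real.sqrt (2 * Real.pi)))) *
      (Real.exp (-(z/σ) ^ 2 / 2) *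
        Real.exp (-((k - (-(z*σ₁^2/(σ₁^2+σ₂^2))))/τ) ^ 2 / 2)) by ring,
    ← Real.exp_add]
  have hpre : σ₂*σ₁ = σ*τ := by
    rw [hτdef]; field_simp
  have hexp : -((z+k)/σ₂) ^ 2 / 2 + -(k/σ₁) ^ 2 / 2 =
      -(z/σ) ^ 2 / 2 + -((k - (-(z*σ₁^2/(σ₁^2+σ₂^2))))/τ) ^ 2 / 2 := by
    rw [div_pow, div_pow, div_pow, div_pow, hσsq, hτsq]
    field_simp
    ring
  rw [hpre, hexp]

set_option maxHeartbeats 1000000 in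
theorem convolution_of_approximate_discrete_gaussians :
    ∃ ε₀ : ℝ, 0 < ε₀ ∧
      ∀ (M ε : ℝ), 1 ≤ M → 0 < ε → ε ≤ ε₀ →
        ∃ σ₀ : ℝ, ∀ σ₁ σ₂ : ℝ, σ₀ < σ₁ → σ₁ ≤ σ₂ →
          ∀ (ξ ζ : ℤ → ℝ), (∀ k, 0 < ξ k) → (∀ k, 0 < ζ k) →
            (∀ k : ℤ, |(k : ℝ)| ≤ M * σ₂ →
              ((1 - ε) / σ₂) * gaussDens ((k : ℝ) / σ₂) ≤ ξ k) →
            (∀ k : ℤ, |(k : ℝ)| ≤ M * σ₁ →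
              ((1 - ε) / σ₁) * gaussDens ((k : ℝ) / σ₁) ≤ ζ k) →
            ∀ z : ℤ, |(z : ℝ)| ≤ M * σ₂ / 9 →
              ENNReal.ofReal ((1 - ε) ^ 3 * (1 - gaussTail (M / 4)) *
                  (1 / Real.sqrt (σ₁ ^ 2 + σ₂ ^ 2)) *
                  gaussDens ((z : ℝ) / Real.sqrt (σ₁ ^ 2 + σ₂ ^ 2)))
                ≤ ∑' k : ℤ, ENNReal.ofReal (ξ (z + k) * ζ (-k)) := by
  refine ⟨1/5, by norm_num, fun M ε hM hε hεle => ⟨100/ε, fun σ₁ σ₂ hσ₀ h12 ξ ζ hξpos hζpos hξ hζ z hz => ?_⟩⟩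
  have hε5 : ε ≤ 1/5 := hεle
  have hε1 : 0 ≤ 1 - ε := by linarith
  have h500 : (500:ℝ) ≤ 100/ε := by rw [le_div_iff₀ hε]; linarith
  have hσ1big : 500 < σ₁ := lt_of_le_of_lt h500 hσ₀
  have hσ1 : 0 < σ₁ := by linarith
  have hσ2 : 0 < σ₂ := lt_of_lt_of_le hσ1 h12
  have hεσ1 : 100 < σ₁ * ε := (div_lt_iff₀ hε).1 hσ₀
  have hM0 : (0:ℝ) < M := by linarith
  set s : ℝ := σ₁^2+σ₂^2 with hsdef
  have hspos : 0 < s := by positivity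
  set σ : ℝ := Real.sqrt s with hσdef
  have hσpos : 0 < σ := Real.sqrt_pos.2 hspos
  have hσsq : σ^2 = s := Real.sq_sqrt hspos.le
  have hσsq' : σ^2 = σ₁^2 + σ₂^2 := hσsq
  have hσ_ge : σ₂ ≤ σ := by nlinarith [hσsq', hσpos, hσ2]
  have hσ_le : σ ≤ 2*σ₂ := by nlinarith [hσsq', hσpos, hσ2, sq_nonneg (σ₁ - σ₂), h12]
  set τ : ℝ := σ₁*σ₂/σ with hτdef
  have hτpos : 0 < τ := by rw [hτdef]; positivity
  have hτle : τ ≤ σ₁ := by rw [hτdef, div_le_iff₀ hσpos]; nlinarith [hσ_ge, hσ1]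
  have hτge : σ₁/2 ≤ τ := by rw [hτdef, le_div_iff₀ hσpos]; nlinarith [hσ_le, hσ1, hσ2]
  have hτbig : 250 ≤ τ := by linarith
  have hετ : 50 ≤ ε*τ := by
    have t := mul_le_mul_of_nonneg_left hτge hε.le
    have t2 : ε*(σ₁/2) = σ₁*ε/2 := by ring
    linarith [t, t2]
  have hτ3 : 3/τ ≤ ε := by rw [div_le_iff₀ hτpos]; linarith [hετ, mul_comm ε τ]
  set c : ℝ := -((z:ℝ)*σ₁^2/s) with hcdef
  have hzabs : |(z:ℝ)| ≤ M*σ₂/9 := hz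
  have hzabs' := abs_le.1 hzabs
  have hc : |c| ≤ M*σ₁/18 := by
    have e : |c| = |(z:ℝ)| * σ₁^2 / s := by
      rw [hcdef, abs_neg, abs_div, abs_mul, abs_of_pos hspos, abs_of_pos (pow_pos hσ1 2)]
    rw [e, div_le_iff₀ hspos, hsdef]
    have h1 : |(z:ℝ)| * σ₁^2 ≤ (M*σ₂/9) * σ₁^2 := mul_le_mul_of_nonneg_right hzabs (sq_nonneg σ₁)
    have h2 : 0 ≤ M*σ₁*(σ₁-σ₂)^2 := by positivity
    nlinarith [h1, h2]
  have hc' := abs_le.1 hc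
  set A : ℤ := ⌈c⌉ with hAdef
  have hA1 : c ≤ (A:ℝ) := Int.le_ceil c
  have hA2 : (A:ℝ) ≤ c + 1 := (Int.ceil_lt_add_one c).le
  set n : ℕ := ⌊M*τ/4⌋₊ - 1 with hndef
  have hMτ : 62 ≤ M*τ/4 := by
    have t : 1*τ ≤ M*τ := mul_le_mul_of_nonneg_right hM hτpos.le
    linarith [t]
  have hfl : 62 ≤ ⌊M*τ/4⌋₊ := Nat.le_floor (by exact_mod_cast hMτ)
  have hn61 : 61 ≤ n := by omega
  have hn_cast : (n:ℝ) = (⌊M*τ/4⌋₊:ℝ) - 1 := by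
    rw [hndef]
    have h1 : 1 ≤ ⌊M*τ/4⌋₊ := by omega
    push_cast [h1]
    ring
  have hn_le : (n:ℝ) ≤ M*τ/4 - 1 := by
    rw [hn_cast]
    have := Nat.floor_le (show (0:ℝ) ≤ M*τ/4 by positivity)
    linarith
  have hn_ge : M*τ/4 - 2 ≤ (n:ℝ) := by
    rw [hn_cast]
    have := Nat.lt_floor_add_one (M*τ/4)
    linarith
  have hn1 : (1:ℝ) ≤ (n:ℝ) := by exact_mod_cast Nat.one_le_iff_ne_zero.2 (by omega)
  set g : ℝ → ℝ := fun x => (1/τ) * gaussDens ((x - c)/τ) with hgdef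
  clear_value s σ τ c A n g
  -- key pointwise bound
  have key : ∀ k : ℤ, c - ((n:ℝ)+1) ≤ (k:ℝ) → (k:ℝ) ≤ c + (n:ℝ) →
      (1-ε)^2 * ((1/σ) * gaussDens ((z:ℝ)/σ)) * g (k:ℝ) ≤ ξ (z+k) * ζ (-k) := by
    intro k hk1 hk2
    have hMτσ : 0 ≤ M*(σ₁-τ) := mul_nonneg hM0.le (by linarith)
    have hMσ1 : 0 ≤ M*σ₁ := mul_nonneg hM0.le hσ1.le
    have hMσ21 : 0 ≤ M*(σ₂-σ₁) := mul_nonneg hM0.le (by linarith)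
    have hkabs : |(k:ℝ)| ≤ M*σ₁ := by
      rw [abs_le]
      constructor <;> linarith [hc'.1, hc'.2, hn_le, hk1, hk2, hMτσ, hMσ1]
    have hkabs' := abs_le.1 hkabs
    have hzk : |((z:ℝ)+(k:ℝ))| ≤ M*σ₂ := by
      rw [abs_le]
      constructor <;> linarith [hzabs'.1, hzabs'.2, hkabs'.1, hkabs'.2, hMσ21]
    have b1 : (1-ε)/σ₂ * gaussDens (((z:ℝ)+(k:ℝ))/σ₂) ≤ ξ (z+k) := by
      have h := hξ (z+k) (by push_cast; exact hzk)
      push_cast at h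
      exact h
    have b2 : (1-ε)/σ₁ * gaussDens ((k:ℝ)/σ₁) ≤ ζ (-k) := by
      have h := hζ (-k) (by push_cast; rwa [abs_neg])
      push_cast at h
      rwa [neg_div, gaussDens_even] at h
    have prod_le : ((1-ε)/σ₂ * gaussDens (((z:ℝ)+(k:ℝ))/σ₂)) *
        ((1-ε)/σ₁ * gaussDens ((k:ℝ)/σ₁)) ≤ ξ (z+k) * ζ (-k) :=
      mul_le_mul b1 b2
        (mul_nonneg (div_nonneg hε1 hσ1.le) (gaussDens_nonneg _)) ((hξpos _).le)
    refine le_trans (le_of_eq ?_) prod_le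
    have hp := gauss_prod σ₁ σ₂ (z:ℝ) (k:ℝ) hσ1 hσ2
    rw [hgdef]
    dsimp only
    rw [hcdef, hτdef, hσdef, hsdef]
    linear_combination (-(1-ε)^2 : ℝ) * hp
  -- monotonicity of g on the two half-windows
  have hτnn : (0:ℝ) ≤ 1/τ := by positivity
  have hganti : AntitoneOn g (Set.Icc ((A:ℝ)) ((A:ℝ) + (n:ℕ))) := by
    intro x hx y hy hxy
    rw [hgdef]
    dsimp only
    refine mul_le_mul_of_nonneg_left ?_ hτnn
    exact gaussDens_anti (div_nonneg (by linarith [hx.1]) hτpos.le)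
      ((div_le_div_iff_of_pos_right hτpos).2 (by linarith))
  have hgmono : MonotoneOn g (Set.Icc ((A:ℝ)-1-(n:ℝ)) (((A:ℝ)-1-(n:ℝ)) + (n:ℕ))) := by
    intro x hx y hy hxy
    rw [hgdef]
    dsimp only
    refine mul_le_mul_of_nonneg_left ?_ hτnn
    rw [show (x - c)/τ = -((c-x)/τ) by ring, show (y - c)/τ = -((c-y)/τ) by ring,
      gaussDens_even, gaussDens_even]
    have hy2 := hy.2
    exact gaussDens_anti (div_nonneg (by linarith) hτpos.le)
      ((div_le_div_iff_of_pos_right hτpos).2 (by linarith))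
  have int1 := hganti.integral_le_sum
  have int2 := hgmono.integral_le_sum
  have hCnn : (0:ℝ) ≤ (1-ε)^2 * ((1/σ) * gaussDens ((z:ℝ)/σ)) :=
    mul_nonneg (by positivity) (mul_nonneg (by positivity) (gaussDens_nonneg _))
  have hS1 : (1-ε)^2 * ((1/σ) * gaussDens ((z:ℝ)/σ)) * (∫ x in (A:ℝ)..((A:ℝ)+(n:ℕ)), g x)
      ≤ ∑ i ∈ Finset.range n, ξ (z+(A+(i:ℤ))) * ζ (-(A+(i:ℤ))) := by
    calc (1-ε)^2 * ((1/σ) * gaussDens ((z:ℝ)/σ)) * (∫ x in (A:ℝ)..((A:ℝ)+(n:ℕ)), g x)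
        ≤ (1-ε)^2 * ((1/σ) * gaussDens ((z:ℝ)/σ)) *
            ∑ i ∈ Finset.range n, g ((A:ℝ)+(i:ℕ)) :=
          mul_le_mul_of_nonneg_left int1 hCnn
      _ = ∑ i ∈ Finset.range n,
            (1-ε)^2 * ((1/σ) * gaussDens ((z:ℝ)/σ)) * g ((A:ℝ)+(i:ℕ)) :=
          Finset.mul_sum _ _ _
      _ ≤ ∑ i ∈ Finset.range n, ξ (z+(A+(i:ℤ))) * ζ (-(A+(i:ℤ))) := by
          apply Finset.sum_le_sum
          intro i hi
          have hin : (i:ℝ) + 1 ≤ (n:ℝ) := by exact_mod_cast Finset.mem_range.1 hi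
          have hi0 : (0:ℝ) ≤ (i:ℝ) := Nat.cast_nonneg i
          have h := key (A+(i:ℤ)) (by push_cast; linarith) (by push_cast; linarith)
          rw [show ((A+(i:ℤ) : ℤ):ℝ) = (A:ℝ)+(i:ℕ) by push_cast; ring] at h
          exact h
  have hS2 : (1-ε)^2 * ((1/σ) * gaussDens ((z:ℝ)/σ)) *
        (∫ x in ((A:ℝ)-1-(n:ℝ))..(((A:ℝ)-1-(n:ℝ))+(n:ℕ)), g x)
      ≤ ∑ i ∈ Finset.range n, ξ (z+(A-(n:ℤ)+(i:ℤ))) * ζ (-(A-(n:ℤ)+(i:ℤ))) := by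
    calc (1-ε)^2 * ((1/σ) * gaussDens ((z:ℝ)/σ)) *
          (∫ x in ((A:ℝ)-1-(n:ℝ))..(((A:ℝ)-1-(n:ℝ))+(n:ℕ)), g x)
        ≤ (1-ε)^2 * ((1/σ) * gaussDens ((z:ℝ)/σ)) *
            ∑ i ∈ Finset.range n, g (((A:ℝ)-1-(n:ℝ)) + ((i+1 : ℕ):ℝ)) :=
          mul_le_mul_of_nonneg_left int2 hCnn
      _ = ∑ i ∈ Finset.range n,
            (1-ε)^2 * ((1/σ) * gaussDens ((z:ℝ)/σ)) * g (((A:ℝ)-1-(n:ℝ)) + ((i+1 : ℕ):ℝ)) :=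
          Finset.mul_sum _ _ _
      _ ≤ ∑ i ∈ Finset.range n, ξ (z+(A-(n:ℤ)+(i:ℤ))) * ζ (-(A-(n:ℤ)+(i:ℤ))) := by
          apply Finset.sum_le_sum
          intro i hi
          have hin : (i:ℝ) + 1 ≤ (n:ℝ) := by exact_mod_cast Finset.mem_range.1 hi
          have hi0 : (0:ℝ) ≤ (i:ℝ) := Nat.cast_nonneg i
          have h := key (A-(n:ℤ)+(i:ℤ)) (by push_cast; linarith) (by push_cast; linarith)
          rw [show ((A-(n:ℤ)+(i:ℤ) : ℤ):ℝ) = ((A:ℝ)-1-(n:ℝ)) + ((i+1 : ℕ):ℝ) by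
            push_cast; ring] at h
          exact h
  -- integral transformation
  have hτne : τ ≠ 0 := ne_of_gt hτpos
  have gInt : ∀ p q : ℝ, (∫ x in p..q, g x)
      = (1/Real.sqrt (2*Real.pi)) * ∫ u in (p-c)/τ..(q-c)/τ, Real.exp (-u^2/2) := by
    intro p q
    have e1 : (∫ x in p..q, g x)
        = ∫ x in p..q, (1/τ * (1/Real.sqrt (2*Real.pi))) *
            ((fun u : ℝ => Real.exp (-u^2/2)) (x/τ - c/τ)) := by
      apply intervalIntegral.integral_congr
      intro x _
      rw [hgdef]
      dsimp only
      unfold gaussDens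
      rw [show x/τ - c/τ = (x-c)/τ by ring]
      ring
    rw [e1, intervalIntegral.integral_const_mul,
      intervalIntegral.integral_comp_div_sub (fun u : ℝ => Real.exp (-u^2/2)) hτne (c/τ)]
    rw [show p/τ - c/τ = (p-c)/τ by ring, show q/τ - c/τ = (q-c)/τ by ring, smul_eq_mul]
    field_simp
  -- lower bounds on the two integrals
  have hI1 : (1/Real.sqrt (2*Real.pi)) * (∫ u in (1/τ)..((n:ℝ)/τ), Real.exp (-u^2/2))
      ≤ ∫ x in (A:ℝ)..((A:ℝ)+(n:ℕ)), g x := by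
    rw [gInt]
    refine mul_le_mul_of_nonneg_left ?_ (by positivity)
    exact gauss_int_incl ((div_le_div_iff_of_pos_right hτpos).2 (by linarith))
      ((div_le_div_iff_of_pos_right hτpos).2 (by linarith))
      ((div_le_div_iff_of_pos_right hτpos).2 (by linarith))
  have hI2 : (1/Real.sqrt (2*Real.pi)) * (∫ u in (1/τ)..((n:ℝ)/τ), Real.exp (-u^2/2))
      ≤ ∫ x in ((A:ℝ)-1-(n:ℝ))..(((A:ℝ)-1-(n:ℝ))+(n:ℕ)), g x := by
    rw [gInt, ← gauss_int_sym (1/τ) ((n:ℝ)/τ)]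
    refine mul_le_mul_of_nonneg_left ?_ (by positivity)
    refine gauss_int_incl ?_ ?_ ?_
    · rw [show -((n:ℝ)/τ) = (-(n:ℝ))/τ by ring]
      exact (div_le_div_iff_of_pos_right hτpos).2 (by linarith)
    · rw [show -((n:ℝ)/τ) = (-(n:ℝ))/τ by ring, show -((1:ℝ)/τ) = (-1:ℝ)/τ by ring]
      exact (div_le_div_iff_of_pos_right hτpos).2 (by linarith)
    · rw [show -((1:ℝ)/τ) = (-1:ℝ)/τ by ring]
      exact (div_le_div_iff_of_pos_right hτpos).2 (by linarith)
  -- estimate the standardized integral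
  have h1τ : (0:ℝ) < 1/τ := by positivity
  have h2τ : (0:ℝ) < 2/τ := by positivity
  have hτ14 : 3/τ ≤ 1/4 := by rw [div_le_iff₀ hτpos]; linarith
  have hordJ : 1/τ ≤ M/4 - 2/τ := by
    have e3 : (1:ℝ)/τ + 2/τ = 3/τ := by ring
    linarith
  have hJ3 : (∫ x in (1/τ)..(M/4 - 2/τ), Real.exp (-x^2/2))
      ≤ ∫ x in (1/τ)..((n:ℝ)/τ), Real.exp (-x^2/2) := by
    refine gauss_int_incl le_rfl hordJ ?_
    rw [show M/4 - 2/τ = (M*τ/4 - 2)/τ by field_simp]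
    exact (div_le_div_iff_of_pos_right hτpos).2 (by linarith)
  have s1 := intervalIntegral.integral_add_adjacent_intervals
    (gauss_ii 0 (1/τ)) (gauss_ii (1/τ) (M/4 - 2/τ))
  have s2 := intervalIntegral.integral_add_adjacent_intervals
    (gauss_ii 0 (M/4 - 2/τ)) (gauss_ii (M/4 - 2/τ) (M/4))
  have b1 := gauss_int_le_length h1τ.le
  have b2 := gauss_int_le_length (show M/4 - 2/τ ≤ M/4 by linarith)
  have Jval : ∫ x in (0:ℝ)..(M/4), Real.exp (-x^2/2)
      = Real.sqrt (2*Real.pi)/2 - gaussTail (M/4) := by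
    rw [gauss_interval_eq, gaussTail_zero]
  have hJ : Real.sqrt (2*Real.pi)/2 - gaussTail (M/4) - 3/τ
      ≤ ∫ x in (1/τ)..((n:ℝ)/τ), Real.exp (-x^2/2) := by
    have e3 : (1:ℝ)/τ + 2/τ = 3/τ := by ring
    linarith [s1, s2, b1, b2, hJ3, Jval]
  have hΦ : 0 ≤ gaussTail (M/4) := gaussTail_nonneg _
  obtain ⟨hq1, hq2⟩ := sqrt_two_pi_bounds
  have hQpos : (0:ℝ) < Real.sqrt (2*Real.pi) := by linarith
  have main_est : (1-ε)*(1 - gaussTail (M/4)) ≤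
      (∫ x in (A:ℝ)..((A:ℝ)+(n:ℕ)), g x)
        + (∫ x in ((A:ℝ)-1-(n:ℝ))..(((A:ℝ)-1-(n:ℝ))+(n:ℕ)), g x) := by
    have step : (1/Real.sqrt (2*Real.pi)) * (Real.sqrt (2*Real.pi)/2 - gaussTail (M/4) - 3/τ)
        ≤ (1/Real.sqrt (2*Real.pi)) * ∫ x in (1/τ)..((n:ℝ)/τ), Real.exp (-x^2/2) :=
      mul_le_mul_of_nonneg_left hJ (by positivity)
    have num : (1-ε)*(1 - gaussTail (M/4)) ≤
        2 * ((1/Real.sqrt (2*Real.pi)) * (Real.sqrt (2*Real.pi)/2 - gaussTail (M/4) - 3/τ)) := by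
      rw [show 2 * ((1/Real.sqrt (2*Real.pi)) * (Real.sqrt (2*Real.pi)/2 - gaussTail (M/4) - 3/τ))
          = (Real.sqrt (2*Real.pi) - 2*gaussTail (M/4) - 6/τ)/Real.sqrt (2*Real.pi) by
            field_simp; ring]
      rw [le_div_iff₀ hQpos]
      have h6τ : 6/τ ≤ 2*ε := by
        rw [show (6:ℝ)/τ = 2*(3/τ) by ring]; linarith
      have hQε : (0:ℝ) ≤ Real.sqrt (2*Real.pi)*(1-ε) - 2 := by
        have h45 : (4:ℝ)/5 ≤ 1-ε := by linarith
        have t := mul_le_mul hq1 h45 (by linarith) (by linarith)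
        linarith [t]
      have hεQ : ε*2.5 ≤ ε*Real.sqrt (2*Real.pi) := mul_le_mul_of_nonneg_left hq1 hε.le
      have t1 : (0:ℝ) ≤ gaussTail (M/4) * (Real.sqrt (2*Real.pi)*(1-ε) - 2) :=
        mul_nonneg hΦ hQε
      linarith [t1, hεQ, h6τ]
    linarith [hI1, hI2, step, num]
  have real_ineq : (1-ε)^3 * (1 - gaussTail (M/4)) * (1/σ) * gaussDens ((z:ℝ)/σ)
      ≤ (∑ i ∈ Finset.range n, ξ (z+(A+(i:ℤ))) * ζ (-(A+(i:ℤ))))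
        + (∑ i ∈ Finset.range n, ξ (z+(A-(n:ℤ)+(i:ℤ))) * ζ (-(A-(n:ℤ)+(i:ℤ)))) := by
    calc (1-ε)^3 * (1 - gaussTail (M/4)) * (1/σ) * gaussDens ((z:ℝ)/σ)
        = ((1-ε)^2 * ((1/σ) * gaussDens ((z:ℝ)/σ))) * ((1-ε)*(1 - gaussTail (M/4))) := by ring
      _ ≤ ((1-ε)^2 * ((1/σ) * gaussDens ((z:ℝ)/σ))) *
            ((∫ x in (A:ℝ)..((A:ℝ)+(n:ℕ)), g x)
              + (∫ x in ((A:ℝ)-1-(n:ℝ))..(((A:ℝ)-1-(n:ℝ))+(n:ℕ)), g x)) :=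
          mul_le_mul_of_nonneg_left main_est hCnn
      _ = (1-ε)^2 * ((1/σ) * gaussDens ((z:ℝ)/σ)) * (∫ x in (A:ℝ)..((A:ℝ)+(n:ℕ)), g x)
            + (1-ε)^2 * ((1/σ) * gaussDens ((z:ℝ)/σ)) *
              (∫ x in ((A:ℝ)-1-(n:ℝ))..(((A:ℝ)-1-(n:ℝ))+(n:ℕ)), g x) := by ring
      _ ≤ _ := add_le_add hS1 hS2
  -- ENNReal conclusion
  have hofsum1 : ENNReal.ofReal (∑ i ∈ Finset.range n, ξ (z+(A+(i:ℤ))) * ζ (-(A+(i:ℤ))))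
      = ∑ i ∈ Finset.range n, ENNReal.ofReal (ξ (z+(A+(i:ℤ))) * ζ (-(A+(i:ℤ)))) :=
    ENNReal.ofReal_sum_of_nonneg (fun i _ => (mul_pos (hξpos _) (hζpos _)).le)
  have hofsum2 : ENNReal.ofReal
        (∑ i ∈ Finset.range n, ξ (z+(A-(n:ℤ)+(i:ℤ))) * ζ (-(A-(n:ℤ)+(i:ℤ))))
      = ∑ i ∈ Finset.range n, ENNReal.ofReal (ξ (z+(A-(n:ℤ)+(i:ℤ))) * ζ (-(A-(n:ℤ)+(i:ℤ)))) :=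
    ENNReal.ofReal_sum_of_nonneg (fun i _ => (mul_pos (hξpos _) (hζpos _)).le)
  have himg1 : ∑ k ∈ (Finset.range n).image (fun i : ℕ => A + (i:ℤ)),
        ENNReal.ofReal (ξ (z+k) * ζ (-k))
      = ∑ i ∈ Finset.range n, ENNReal.ofReal (ξ (z+(A+(i:ℤ))) * ζ (-(A+(i:ℤ)))) :=
    Finset.sum_image (by intro x _ y _ h; have h' : A + (x:ℤ) = A + (y:ℤ) := h; omega)
  have himg2 : ∑ k ∈ (Finset.range n).image (fun i : ℕ => A - (n:ℤ) + (i:ℤ)),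
        ENNReal.ofReal (ξ (z+k) * ζ (-k))
      = ∑ i ∈ Finset.range n, ENNReal.ofReal (ξ (z+(A-(n:ℤ)+(i:ℤ))) * ζ (-(A-(n:ℤ)+(i:ℤ)))) :=
    Finset.sum_image (by intro x _ y _ h; have h' : A - (n:ℤ) + (x:ℤ) = A - (n:ℤ) + (y:ℤ) := h; omega)
  have hdisj : Disjoint ((Finset.range n).image (fun i : ℕ => A + (i:ℤ)))
      ((Finset.range n).image (fun i : ℕ => A - (n:ℤ) + (i:ℤ))) := by
    rw [Finset.disjoint_left]
    intro k hk1 hk2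
    simp only [Finset.mem_image, Finset.mem_range] at hk1 hk2
    obtain ⟨i, hi, rfl⟩ := hk1
    obtain ⟨j, hj, hval⟩ := hk2
    omega
  calc ENNReal.ofReal ((1-ε)^3 * (1 - gaussTail (M/4)) * (1/σ) * gaussDens ((z:ℝ)/σ))
      ≤ ENNReal.ofReal ((∑ i ∈ Finset.range n, ξ (z+(A+(i:ℤ))) * ζ (-(A+(i:ℤ))))
          + (∑ i ∈ Finset.range n, ξ (z+(A-(n:ℤ)+(i:ℤ))) * ζ (-(A-(n:ℤ)+(i:ℤ))))) :=
        ENNReal.ofReal_le_ofReal real_ineq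
    _ ≤ ENNReal.ofReal (∑ i ∈ Finset.range n, ξ (z+(A+(i:ℤ))) * ζ (-(A+(i:ℤ))))
          + ENNReal.ofReal (∑ i ∈ Finset.range n, ξ (z+(A-(n:ℤ)+(i:ℤ))) * ζ (-(A-(n:ℤ)+(i:ℤ)))) :=
        ENNReal.ofReal_add_le
    _ = (∑ k ∈ (Finset.range n).image (fun i : ℕ => A + (i:ℤ)),
            ENNReal.ofReal (ξ (z+k) * ζ (-k)))
          + ∑ k ∈ (Finset.range n).image (fun i : ℕ => A - (n:ℤ) + (i:ℤ)),
            ENNReal.ofReal (ξ (z+k) * ζ (-k)) := by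
        rw [hofsum1, hofsum2, himg1, himg2]
    _ = ∑ k ∈ ((Finset.range n).image (fun i : ℕ => A + (i:ℤ)))
          ∪ ((Finset.range n).image (fun i : ℕ => A - (n:ℤ) + (i:ℤ))),
            ENNReal.ofReal (ξ (z+k) * ζ (-k)) := (Finset.sum_union hdisj).symm
    _ ≤ ∑' k : ℤ, ENNReal.ofReal (ξ (z + k) * ζ (-k)) := ENNReal.sum_le_tsum _
end
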